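/- The 'generally' modality with h = id is non-expansive: for any discrete probability distribution μ on X and any f, g : X → [0,1], |⟦◯f⟧(μ) - ⟦◯g⟧(μ)| ≤ sup_{x∈X} |f(x) - g(x)|, where ⟦◯f⟧(μ) = sup_{α∈[0,1]} min(α, μ({x | f(x) ≥ α})). -/
import Mathlib


/-- Total measure of a set under a discrete distribution given by a density. -/
noncomputable def pmeas {X : Type*} (μ : X → ℝ) (S : Set X) : ℝ := ∑' x : S, μ x

/-- Semantics of the fuzzy modality `generally` with conversion function `h = id`. -/
noncomputable def gen {X : Type*} (μ : X → ℝ) (f : X → ℝ) : ℝ :=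
  ⨆ α : Set.Icc (0:ℝ) 1, min α.1 (pmeas μ {x | f x ≥ α.1})

lemma pmeas_mono {X : Type*} (μ : X → ℝ) (hμ0 : ∀ x, 0 ≤ μ x) (hμs : Summable μ)
    {S T : Set X} (hST : S ⊆ T) : pmeas μ S ≤ pmeas μ T := by
  unfold pmeas
  rw [tsum_subtype, tsum_subtype]
  refine Summable.tsum_le_tsum (fun x => ?_) (hμs.indicator S) (hμs.indicator T)
  by_cases hx : x ∈ S
  · rw [Set.indicator_of_mem hx, Set.indicator_of_mem (hST hx)]
  · rw [Set.indicator_of_notMem hx]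
    exact Set.indicator_nonneg (fun y _ => hμ0 y) x

lemma gen_le_gen_add {X : Type*} (μ : X → ℝ) (hμ0 : ∀ x, 0 ≤ μ x) (hμs : Summable μ)
    (f g : X → ℝ) (hg : ∀ x, g x ∈ Set.Icc (0:ℝ) 1) {ε : ℝ} (hε0 : 0 ≤ ε)
    (hε : ∀ x, f x ≤ g x + ε) : gen μ f ≤ gen μ g + ε := by
  unfold gen
  have hne : Nonempty (Set.Icc (0:ℝ) 1) := ⟨⟨0, by norm_num⟩⟩
  refine ciSup_le (fun α => ?_)
  set α' : Set.Icc (0:ℝ) 1 := ⟨max (α.1 - ε) 0, le_max_right _ _,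
    max_le (by linarith [α.2.2]) (by norm_num)⟩
  have hsub : {x | f x ≥ α.1} ⊆ {x | g x ≥ α'.1} := by
    intro x hx
    simp only [Set.mem_setOf_eq, ge_iff_le] at hx ⊢
    refine max_le (by have := hε x; linarith) (hg x).1
  have hbdd : BddAbove (Set.range fun β : Set.Icc (0:ℝ) 1 =>
      min β.1 (pmeas μ {x | g x ≥ β.1})) := by
    refine ⟨1, ?_⟩
    rintro _ ⟨β, rfl⟩
    exact le_trans (min_le_left _ _) β.2.2
  have h1 : min α'.1 (pmeas μ {x | g x ≥ α'.1}) ≤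
      ⨆ β : Set.Icc (0:ℝ) 1, min β.1 (pmeas μ {x | g x ≥ β.1}) := le_ciSup hbdd α'
  have h2 : pmeas μ {x | f x ≥ α.1} ≤ pmeas μ {x | g x ≥ α'.1} :=
    pmeas_mono μ hμ0 hμs hsub
  have h3 : α.1 ≤ α'.1 + ε := by
    have := le_max_left (α.1 - ε) 0; simp only [α']; linarith
  have : min α.1 (pmeas μ {x | f x ≥ α.1}) ≤ min α'.1 (pmeas μ {x | g x ≥ α'.1}) + ε := by
    rcases min_cases α'.1 (pmeas μ {x | g x ≥ α'.1}) with ⟨h, _⟩ | ⟨h, _⟩ <;> rw [h]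
    · exact le_trans (min_le_left _ _) h3
    · exact le_trans (le_trans (min_le_right _ _) h2) (by linarith)
  linarith

/-- Non-expansiveness of the `generally` modality with `h = id`. -/
theorem stmt19 {X : Type*} (μ : X → ℝ) (hμ0 : ∀ x, 0 ≤ μ x)
    (hμs : Summable μ) (hμ1 : ∑' x, μ x = 1)
    (f g : X → ℝ) (hf : ∀ x, f x ∈ Set.Icc (0:ℝ) 1) (hg : ∀ x, g x ∈ Set.Icc (0:ℝ) 1) :
    |gen μ f - gen μ g| ≤ ⨆ x, |f x - g x| := by
  by_cases hX : Nonempty X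
  · set ε := ⨆ x, |f x - g x| with hεdef
    have hbdd : BddAbove (Set.range fun x => |f x - g x|) := by
      refine ⟨1, ?_⟩
      rintro _ ⟨x, rfl⟩
      have h1 := hf x; have h2 := hg x
      rw [abs_sub_le_iff]
      constructor <;> simp only [Set.mem_Icc] at h1 h2 <;> linarith [h1.1, h1.2, h2.1, h2.2]
    have hle : ∀ x, |f x - g x| ≤ ε := fun x => le_ciSup hbdd x
    have hε0 : 0 ≤ ε := le_trans (abs_nonneg _) (hle hX.some)
    rw [abs_sub_le_iff]
    constructor
    · have := gen_le_gen_add μ hμ0 hμs f g hg hε0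
        (fun x => by have := abs_le.mp (hle x); linarith [this.2])
      linarith
    · have := gen_le_gen_add μ hμ0 hμs g f hf hε0
        (fun x => by have := abs_le.mp (hle x); linarith [this.1])
      linarith
  · haveI : IsEmpty X := not_nonempty_iff.mp hX
    have hgen : ∀ h : X → ℝ, gen μ h = 0 := by
      intro h
      unfold gen
      have heq : ∀ α : Set.Icc (0:ℝ) 1, min α.1 (pmeas μ {x | h x ≥ α.1}) = 0 := by
        intro α
        have : pmeas μ {x | h x ≥ α.1} = 0 := by
          unfold pmeas; exact tsum_empty
        rw [this, min_eq_right α.2.1]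
      simp only [heq]
      exact ciSup_const
    rw [hgen f, hgen g, sub_zero, abs_zero]
    rw [Real.iSup_of_isEmpty]
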